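/- Let I be an almost surely strictly positive real random variable, let f : (0,∞) → [0,∞) be nondecreasing, and let r > 1. Then ∑_{n=1}^∞ P(r^{n+1} ≤ f(r^{n}·I)) ≤ (1/log r) · ∫_0^∞ P(s ≤ f(s)·I and r·I < s) · s^{−1} ds ≤ ∑_{n=1}^∞ P(r^{n} ≤ f(r^{n+1}·I)), as inequalities in [0,+∞]. -/

import Mathlib

open MeasureTheory Filter Set
open scoped ENNReal

lemma lint_inv_Ioo {a b : ℝ} (ha : 0 < a) (hab : a ≤ b) :
    ∫⁻ s in Ioo a b, ENNReal.ofReal s⁻¹ = ENNReal.ofReal (Real.log (b / a)) := by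
  have hb : 0 < b := lt_of_lt_of_le ha hab
  have hint : IntegrableOn (fun s : ℝ => s⁻¹) (Ioo a b) := by
    have hc : ContinuousOn (fun s : ℝ => s⁻¹) (Icc a b) := by
      apply ContinuousOn.inv₀ continuousOn_id
      intro x hx; exact ne_of_gt (lt_of_lt_of_le ha hx.1)
    exact (hc.integrableOn_compact isCompact_Icc).mono Ioo_subset_Icc_self le_rfl
  rw [← ofReal_integral_eq_lintegral_ofReal hint]
  · congr 1
    rw [← integral_Ioc_eq_integral_Ioo, ← intervalIntegral.integral_of_le hab]
    exact integral_inv_of_pos ha hb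
  · filter_upwards [ae_restrict_mem measurableSet_Ioo] with s hs
    exact inv_nonneg.2 (le_of_lt (lt_trans ha hs.1))

lemma lint_inv_Ioc {a b : ℝ} (ha : 0 < a) (hab : a ≤ b) :
    ∫⁻ s in Ioc a b, ENNReal.ofReal s⁻¹ = ENNReal.ofReal (Real.log (b / a)) := by
  rw [← Measure.restrict_congr_set Ioo_ae_eq_Ioc]
  exact lint_inv_Ioo ha hab

lemma ratio_eq {r ι : ℝ} (hr : 0 < r) (hι : 0 < ι) (n : ℕ) :
    (r ^ (n + 2) * ι) / (r ^ (n + 1) * ι) = r := by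
  rw [pow_succ]
  field_simp

lemma comp_lower (f : ℝ → ℝ) (hf_mono : MonotoneOn f (Ioi 0)) {r : ℝ} (hr : 1 < r)
    {ι : ℝ} (hι : 0 < ι) :
    (∑' n : ℕ, (if r ^ (n + 2) ≤ f (r ^ (n + 1) * ι) then ENNReal.ofReal (Real.log r) else 0)) ≤
      ∫⁻ s in Ioi (0 : ℝ),
        (if s ≤ f s * ι ∧ r * ι < s then ENNReal.ofReal s⁻¹ else 0) := by
  have hr0 : 0 < r := lt_trans one_pos hr
  set F : ℝ → ℝ≥0∞ := fun s => if s ≤ f s * ι ∧ r * ι < s then ENNReal.ofReal s⁻¹ else 0 with hF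
  set T : ℕ → Set ℝ := fun n => Ioo (r ^ (n + 1) * ι) (r ^ (n + 2) * ι) with hT
  have hpos : ∀ n : ℕ, 0 < r ^ (n + 1) * ι := fun n => mul_pos (pow_pos hr0 _) hι
  have hlt : ∀ n : ℕ, r ^ (n + 1) * ι < r ^ (n + 2) * ι := by
    intro n
    exact mul_lt_mul_of_pos_right (pow_lt_pow_right₀ hr (by omega)) hι
  calc (∑' n : ℕ, (if r ^ (n + 2) ≤ f (r ^ (n + 1) * ι) then ENNReal.ofReal (Real.log r) else 0))
      ≤ ∑' n : ℕ, ∫⁻ s in T n, F s := by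
        apply ENNReal.tsum_le_tsum
        intro n
        by_cases h : r ^ (n + 2) ≤ f (r ^ (n + 1) * ι)
        · rw [if_pos h]
          have heq : ∀ s ∈ T n, F s = ENNReal.ofReal s⁻¹ := by
            intro s hs
            have hs1 : r ^ (n + 1) * ι < s := hs.1
            have hs2 : s < r ^ (n + 2) * ι := hs.2
            have hspos : 0 < s := lt_trans (hpos n) hs1
            show (if s ≤ f s * ι ∧ r * ι < s then ENNReal.ofReal s⁻¹ else 0) = _
            rw [if_pos]
            constructor
            · have h1 : r ^ (n + 2) * ι ≤ f (r ^ (n + 1) * ι) * ι :=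
                mul_le_mul_of_nonneg_right h hι.le
              have h2 : f (r ^ (n + 1) * ι) ≤ f s :=
                hf_mono (hpos n) hspos hs1.le
              exact le_trans hs2.le (le_trans h1 (mul_le_mul_of_nonneg_right h2 hι.le))
            · have : r * ι ≤ r ^ (n + 1) * ι := by
                apply mul_le_mul_of_nonneg_right _ hι.le
                calc r = r ^ 1 := (pow_one r).symm
                _ ≤ r ^ (n + 1) := pow_le_pow_right₀ hr.le (by omega)
              exact lt_of_le_of_lt this hs1
          rw [setLIntegral_congr_fun measurableSet_Ioo heq,
            lint_inv_Ioo (hpos n) (hlt n).le, ratio_eq hr0 hι]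
        · rw [if_neg h]; exact zero_le
    _ = ∫⁻ s in ⋃ n, T n, F s := by
        refine (lintegral_iUnion (fun n => measurableSet_Ioo) ?_ F).symm
        intro m n hmn
        have key : ∀ m n : ℕ, m < n → Disjoint (T m) (T n) := by
          intro m n h
          rw [Set.disjoint_left]
          intro s hsm hsn
          have h1 : s < r ^ (m + 2) * ι := hsm.2
          have h2 : r ^ (n + 1) * ι < s := hsn.1
          have : r ^ (m + 2) * ι ≤ r ^ (n + 1) * ι :=
            mul_le_mul_of_nonneg_right (pow_le_pow_right₀ hr.le (by omega)) hι.le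
          linarith
        rcases lt_or_gt_of_ne hmn with h | h
        · exact key m n h
        · exact (key n m h).symm
    _ ≤ ∫⁻ s in Ioi (0 : ℝ), F s := by
        apply lintegral_mono' (Measure.restrict_mono ?_ le_rfl) le_rfl
        exact Set.iUnion_subset fun n s hs => lt_trans (hpos n) hs.1

lemma comp_upper (f : ℝ → ℝ) (hf_mono : MonotoneOn f (Ioi 0)) {r : ℝ} (hr : 1 < r)
    {ι : ℝ} (hι : 0 < ι) :
    (∫⁻ s in Ioi (0 : ℝ),
        (if s ≤ f s * ι ∧ r * ι < s then ENNReal.ofReal s⁻¹ else 0)) ≤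
      ∑' n : ℕ, (if r ^ (n + 1) ≤ f (r ^ (n + 2) * ι) then ENNReal.ofReal (Real.log r) else 0) := by
  have hr0 : 0 < r := lt_trans one_pos hr
  set F : ℝ → ℝ≥0∞ := fun s => if s ≤ f s * ι ∧ r * ι < s then ENNReal.ofReal s⁻¹ else 0 with hF
  set U : ℕ → Set ℝ := fun n => Ioc (r ^ (n + 1) * ι) (r ^ (n + 2) * ι) with hU
  have hpos : ∀ n : ℕ, 0 < r ^ (n + 1) * ι := fun n => mul_pos (pow_pos hr0 _) hι
  have hle : ∀ n : ℕ, r ^ (n + 1) * ι ≤ r ^ (n + 2) * ι := by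
    intro n
    exact mul_le_mul_of_nonneg_right (pow_le_pow_right₀ hr.le (by omega)) hι.le
  have hUm : MeasurableSet (⋃ n, U n) := MeasurableSet.iUnion fun n => measurableSet_Ioc
  -- coverage
  have hcov : ∀ s : ℝ, r * ι < s → s ∈ ⋃ n, U n := by
    intro s hs
    have hspos : 0 < s := lt_trans (mul_pos hr0 hι) hs
    have hx : 0 < s / ι := div_pos hspos hι
    have hrx : r < s / ι := (lt_div_iff₀ hι).2 (by linarith [mul_comm r ι])
    obtain ⟨k, hk⟩ := exists_mem_Ioc_zpow hx hr
    have hk1 : 1 ≤ k := by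
      have : (r : ℝ) ^ (1 : ℤ) < r ^ (k + 1) := by
        rw [zpow_one]; exact lt_of_lt_of_le hrx hk.2
      have := (zpow_lt_zpow_iff_right₀ hr).1 this
      omega
    obtain ⟨m, rfl⟩ : ∃ m : ℕ, k = (m : ℤ) + 1 := ⟨(k - 1).toNat, by omega⟩
    have e1 : (r : ℝ) ^ ((m : ℤ) + 1) = r ^ (m + 1) := by
      rw [show (m : ℤ) + 1 = ((m + 1 : ℕ) : ℤ) by push_cast; ring, zpow_natCast]
    have e2 : (r : ℝ) ^ ((m : ℤ) + 1 + 1) = r ^ (m + 2) := by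
      rw [show (m : ℤ) + 1 + 1 = ((m + 2 : ℕ) : ℤ) by push_cast; ring, zpow_natCast]
    refine Set.mem_iUnion.2 ⟨m, ?_, ?_⟩
    · have h1 : r ^ (m + 1) < s / ι := by rw [← e1]; exact hk.1
      calc r ^ (m + 1) * ι < (s / ι) * ι := mul_lt_mul_of_pos_right h1 hι
        _ = s := by field_simp
    · have h2 : s / ι ≤ r ^ (m + 2) := by rw [← e2]; exact hk.2
      calc s = (s / ι) * ι := by field_simp
        _ ≤ r ^ (m + 2) * ι := mul_le_mul_of_nonneg_right h2 hι.le
  have hdisj : Pairwise (Function.onFun Disjoint U) := by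
    have key : ∀ m n : ℕ, m < n → Disjoint (U m) (U n) := by
      intro m n h
      rw [Set.disjoint_left]
      intro s hsm hsn
      have h1 : s ≤ r ^ (m + 2) * ι := hsm.2
      have h2 : r ^ (n + 1) * ι < s := hsn.1
      have : r ^ (m + 2) * ι ≤ r ^ (n + 1) * ι :=
        mul_le_mul_of_nonneg_right (pow_le_pow_right₀ hr.le (by omega)) hι.le
      linarith
    intro m n hmn
    rcases lt_or_gt_of_ne hmn with h | h
    · exact key m n h
    · exact (key n m h).symm
  calc ∫⁻ s in Ioi (0 : ℝ), F s
      ≤ ∫⁻ s in Ioi (0 : ℝ), (⋃ n, U n).indicator F s := by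
        apply lintegral_mono
        intro s
        by_cases hs : s ∈ ⋃ n, U n
        · rw [Set.indicator_of_mem hs]
        · rw [Set.indicator_of_notMem hs]
          rw [hF]
          simp only []
          by_cases hc : s ≤ f s * ι ∧ r * ι < s
          · exact absurd (hcov s hc.2) hs
          · rw [if_neg hc]
    _ = ∫⁻ s in (⋃ n, U n) ∩ Ioi (0 : ℝ), F s := by
        rw [lintegral_indicator hUm, Measure.restrict_restrict hUm]
    _ ≤ ∫⁻ s in ⋃ n, U n, F s :=
        lintegral_mono' (Measure.restrict_mono Set.inter_subset_left le_rfl) le_rfl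
    _ = ∑' n, ∫⁻ s in U n, F s := lintegral_iUnion (fun n => measurableSet_Ioc) hdisj F
    _ ≤ ∑' n : ℕ, (if r ^ (n + 1) ≤ f (r ^ (n + 2) * ι) then ENNReal.ofReal (Real.log r) else 0) := by
        apply ENNReal.tsum_le_tsum
        intro n
        by_cases h : r ^ (n + 1) ≤ f (r ^ (n + 2) * ι)
        · rw [if_pos h]
          have : ∫⁻ s in U n, F s ≤ ∫⁻ s in U n, ENNReal.ofReal s⁻¹ := by
            apply lintegral_mono
            intro s
            by_cases hc : s ≤ f s * ι ∧ r * ι < s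
            · rw [hF]; simp only []; rw [if_pos hc]
            · rw [hF]; simp only []; rw [if_neg hc]; exact zero_le
          refine le_trans this ?_
          rw [lint_inv_Ioc (hpos n) (hle n), ratio_eq hr0 hι]
        · rw [if_neg h]
          have heq : ∀ s ∈ U n, F s = 0 := by
            intro s hs
            have hs1 : r ^ (n + 1) * ι < s := hs.1
            have hs2 : s ≤ r ^ (n + 2) * ι := hs.2
            have hspos : 0 < s := lt_trans (hpos n) hs1
            show (if s ≤ f s * ι ∧ r * ι < s then ENNReal.ofReal s⁻¹ else 0) = 0
            rw [if_neg]
            rintro ⟨hc1, -⟩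
            apply h
            have hfs : f s ≤ f (r ^ (n + 2) * ι) :=
              hf_mono hspos (mul_pos (pow_pos hr0 _) hι) hs2
            have : r ^ (n + 1) * ι < f (r ^ (n + 2) * ι) * ι := by
              calc r ^ (n + 1) * ι < s := hs1
                _ ≤ f s * ι := hc1
                _ ≤ f (r ^ (n + 2) * ι) * ι := mul_le_mul_of_nonneg_right hfs hι.le
            exact le_of_lt (lt_of_mul_lt_mul_right this hι.le)
          rw [setLIntegral_congr_fun measurableSet_Ioc heq, lintegral_zero]

/-- Series–integral comparison at `+∞`:
`∑_{n≥1} P(r^{n+1} ≤ f(r^n I)) ≤ (1/log r) ∫_0^∞ P(s ≤ f(s) I, rI < s) s⁻¹ ds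
  ≤ ∑_{n≥1} P(r^n ≤ f(r^{n+1} I))`. -/
theorem series_integral_comparison_at_infinity
    {Ω : Type*} [MeasurableSpace Ω] (ℙ : Measure Ω) [IsProbabilityMeasure ℙ]
    (I : Ω → ℝ) (hI : Measurable I) (hIpos : ∀ᵐ ω ∂ℙ, 0 < I ω)
    (f : ℝ → ℝ) (hf_nn : ∀ s : ℝ, 0 < s → 0 ≤ f s) (hf_mono : MonotoneOn f (Ioi 0))
    (r : ℝ) (hr : 1 < r) :
    (∑' n : ℕ, ℙ {ω | r ^ ((n : ℝ) + 2) ≤ f (r ^ ((n : ℝ) + 1) * I ω)}) ≤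
      ENNReal.ofReal (1 / Real.log r) *
        (∫⁻ s in Ioi (0 : ℝ),
          ℙ {ω | s ≤ f s * I ω ∧ r * I ω < s} * ENNReal.ofReal s⁻¹) ∧
    ENNReal.ofReal (1 / Real.log r) *
        (∫⁻ s in Ioi (0 : ℝ),
          ℙ {ω | s ≤ f s * I ω ∧ r * I ω < s} * ENNReal.ofReal s⁻¹) ≤
      ∑' n : ℕ, ℙ {ω | r ^ ((n : ℝ) + 1) ≤ f (r ^ ((n : ℝ) + 2) * I ω)} := by
  have hr0 : 0 < r := lt_trans one_pos hr
  set L := Real.log r with hLdef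
  have hL : 0 < L := Real.log_pos hr
  obtain ⟨g, hgm, hfg⟩ := aemeasurable_restrict_of_monotoneOn measurableSet_Ioi hf_mono
    (μ := volume)
  -- measurability of the "upper sets"
  have hD : ∀ c a : ℝ, 0 < a → MeasurableSet {x : ℝ | 0 < x ∧ c ≤ f (a * x)} := by
    intro c a ha
    apply Set.OrdConnected.measurableSet
    constructor
    intro x hx y _ z hz
    refine ⟨lt_of_lt_of_le hx.1 hz.1, le_trans hx.2 ?_⟩
    exact hf_mono (mul_pos ha hx.1) (mul_pos ha (lt_of_lt_of_le hx.1 hz.1))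
      (mul_le_mul_of_nonneg_left hz.1 ha.le)
  set A : ℕ → Set Ω := fun n => I ⁻¹' {x | 0 < x ∧ r ^ (n + 2) ≤ f (r ^ (n + 1) * x)} with hA
  set B : ℕ → Set Ω := fun n => I ⁻¹' {x | 0 < x ∧ r ^ (n + 1) ≤ f (r ^ (n + 2) * x)} with hB
  have hAm : ∀ n, MeasurableSet (A n) := fun n => hI (hD _ _ (pow_pos hr0 _))
  have hBm : ∀ n, MeasurableSet (B n) := fun n => hI (hD _ _ (pow_pos hr0 _))
  have epow : ∀ (n : ℕ) (k : ℕ), r ^ ((n : ℝ) + (k : ℝ)) = r ^ (n + k) := by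
    intro n k
    rw [show ((n : ℝ) + (k : ℝ)) = ((n + k : ℕ) : ℝ) by push_cast; ring, Real.rpow_natCast]
  have hsumA : (∑' n : ℕ, ℙ {ω | r ^ ((n : ℝ) + 2) ≤ f (r ^ ((n : ℝ) + 1) * I ω)})
      = ∑' n, ℙ (A n) := by
    apply tsum_congr
    intro n
    apply measure_congr
    rw [eventuallyEq_set]
    filter_upwards [hIpos] with ω hω
    have e1 := epow n 1
    have e2 := epow n 2
    push_cast at e1 e2
    simp only [mem_setOf_eq, hA, mem_preimage, e1, e2]
    exact ⟨fun h => ⟨hω, h⟩, fun h => h.2⟩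
  have hsumB : (∑' n : ℕ, ℙ {ω | r ^ ((n : ℝ) + 1) ≤ f (r ^ ((n : ℝ) + 2) * I ω)})
      = ∑' n, ℙ (B n) := by
    apply tsum_congr
    intro n
    apply measure_congr
    rw [eventuallyEq_set]
    filter_upwards [hIpos] with ω hω
    have e1 := epow n 1
    have e2 := epow n 2
    push_cast at e1 e2
    simp only [mem_setOf_eq, hB, mem_preimage, e1, e2]
    exact ⟨fun h => ⟨hω, h⟩, fun h => h.2⟩
  have hBs : ∀ s : ℝ, MeasurableSet {ω | s ≤ f s * I ω ∧ r * I ω < s} := by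
    intro s
    exact (measurableSet_le measurable_const (measurable_const.mul hI)).inter
      (measurableSet_lt (measurable_const.mul hI) measurable_const)
  set G : ℝ → Ω → ℝ≥0∞ :=
    fun s ω => if s ≤ f s * I ω ∧ r * I ω < s then ENNReal.ofReal s⁻¹ else 0 with hG
  have hGs : ∀ s : ℝ, (∫⁻ ω, G s ω ∂ℙ)
      = ℙ {ω | s ≤ f s * I ω ∧ r * I ω < s} * ENNReal.ofReal s⁻¹ := by
    intro s
    have hGind : (fun ω => G s ω) =
        Set.indicator {ω | s ≤ f s * I ω ∧ r * I ω < s} (fun _ => ENNReal.ofReal s⁻¹) := by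
      funext ω
      show (if s ≤ f s * I ω ∧ r * I ω < s then ENNReal.ofReal s⁻¹ else 0) = _
      simp only [Set.indicator_apply, mem_setOf_eq]
    rw [hGind, lintegral_indicator_const (hBs s), mul_comm]
  have hGprod : AEMeasurable (fun p : ℝ × Ω => G p.1 p.2)
      ((volume.restrict (Ioi (0 : ℝ))).prod ℙ) := by
    obtain ⟨N, hNsub, hNm, hN0⟩ := exists_measurable_superset_of_null (ae_iff.mp hfg)
    refine ⟨fun p => if p.1 ≤ g p.1 * I p.2 ∧ r * I p.2 < p.1
        then ENNReal.ofReal p.1⁻¹ else 0, ?_, ?_⟩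
    · apply Measurable.ite
      · exact (measurableSet_le measurable_fst
          ((hgm.comp measurable_fst).mul (hI.comp measurable_snd))).inter
          (measurableSet_lt (measurable_const.mul (hI.comp measurable_snd)) measurable_fst)
      · exact ENNReal.measurable_ofReal.comp measurable_fst.inv
      · exact measurable_const
    · rw [Filter.EventuallyEq, ae_iff]
      refine measure_mono_null (fun p hp => ?_) ?_ (t := N ×ˢ (univ : Set Ω))
      · refine ⟨?_, trivial⟩
        by_contra hpn
        apply hp
        have hfgp : f p.1 = g p.1 := by
          by_contra hne
          exact hpn (hNsub hne)
        simp only [hG, hfgp]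
      · rw [Measure.prod_prod, hN0, zero_mul]
  have KE : (∫⁻ s in Ioi (0 : ℝ),
        ℙ {ω | s ≤ f s * I ω ∧ r * I ω < s} * ENNReal.ofReal s⁻¹)
      = ∫⁻ ω, (∫⁻ s in Ioi (0 : ℝ), G s ω) ∂ℙ := by
    calc (∫⁻ s in Ioi (0 : ℝ), ℙ {ω | s ≤ f s * I ω ∧ r * I ω < s} * ENNReal.ofReal s⁻¹)
        = ∫⁻ s in Ioi (0 : ℝ), ∫⁻ ω, G s ω ∂ℙ := lintegral_congr fun s => (hGs s).symm
      _ = ∫⁻ ω, (∫⁻ s in Ioi (0 : ℝ), G s ω) ∂ℙ := lintegral_lintegral_swap hGprod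
  have hlow : ∀ᵐ ω ∂ℙ,
      (∑' n : ℕ, (A n).indicator (fun _ => ENNReal.ofReal L) ω) ≤ ∫⁻ s in Ioi (0 : ℝ), G s ω := by
    filter_upwards [hIpos] with ω hω
    refine le_trans (le_of_eq (tsum_congr fun n => ?_)) (comp_lower f hf_mono hr hω)
    by_cases h : r ^ (n + 2) ≤ f (r ^ (n + 1) * I ω)
    · rw [Set.indicator_of_mem (show ω ∈ A n from ⟨hω, h⟩), if_pos h]
    · rw [Set.indicator_of_notMem (fun hc => h hc.2), if_neg h]
  have hup : ∀ᵐ ω ∂ℙ,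
      (∫⁻ s in Ioi (0 : ℝ), G s ω) ≤ ∑' n : ℕ, (B n).indicator (fun _ => ENNReal.ofReal L) ω := by
    filter_upwards [hIpos] with ω hω
    refine le_trans (comp_upper f hf_mono hr hω) (le_of_eq (tsum_congr fun n => ?_).symm)
    by_cases h : r ^ (n + 1) ≤ f (r ^ (n + 2) * I ω)
    · rw [Set.indicator_of_mem (show ω ∈ B n from ⟨hω, h⟩), if_pos h]
    · rw [Set.indicator_of_notMem (fun hc => h hc.2), if_neg h]
  have hlowint : ENNReal.ofReal L * (∑' n, ℙ (A n)) ≤ ∫⁻ ω, (∫⁻ s in Ioi (0 : ℝ), G s ω) ∂ℙ := by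
    calc ENNReal.ofReal L * (∑' n, ℙ (A n)) = ∑' n, ENNReal.ofReal L * ℙ (A n) :=
          ENNReal.tsum_mul_left.symm
      _ = ∑' n, ∫⁻ ω, (A n).indicator (fun _ => ENNReal.ofReal L) ω ∂ℙ :=
          tsum_congr fun n => (lintegral_indicator_const (hAm n) _).symm
      _ = ∫⁻ ω, ∑' n, (A n).indicator (fun _ => ENNReal.ofReal L) ω ∂ℙ :=
          (lintegral_tsum fun n => (measurable_const.indicator (hAm n)).aemeasurable).symm
      _ ≤ _ := lintegral_mono_ae hlow
  have hupint : (∫⁻ ω, (∫⁻ s in Ioi (0 : ℝ), G s ω) ∂ℙ) ≤ ENNReal.ofReal L * (∑' n, ℙ (B n)) := by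
    calc (∫⁻ ω, (∫⁻ s in Ioi (0 : ℝ), G s ω) ∂ℙ)
        ≤ ∫⁻ ω, ∑' n, (B n).indicator (fun _ => ENNReal.ofReal L) ω ∂ℙ := lintegral_mono_ae hup
      _ = ∑' n, ∫⁻ ω, (B n).indicator (fun _ => ENNReal.ofReal L) ω ∂ℙ :=
          lintegral_tsum fun n => (measurable_const.indicator (hBm n)).aemeasurable
      _ = ∑' n, ENNReal.ofReal L * ℙ (B n) :=
          tsum_congr fun n => lintegral_indicator_const (hBm n) _
      _ = ENNReal.ofReal L * (∑' n, ℙ (B n)) := ENNReal.tsum_mul_left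
  have hcancel : ∀ x : ℝ≥0∞, ENNReal.ofReal (1 / L) * (ENNReal.ofReal L * x) = x := by
    intro x
    rw [← mul_assoc, ← ENNReal.ofReal_mul (by positivity), one_div, inv_mul_cancel₀ hL.ne',
      ENNReal.ofReal_one, one_mul]
  constructor
  · rw [hsumA, KE]
    calc (∑' n, ℙ (A n)) = ENNReal.ofReal (1 / L) * (ENNReal.ofReal L * ∑' n, ℙ (A n)) :=
          (hcancel _).symm
      _ ≤ _ := mul_le_mul_right hlowint _
  · rw [hsumB, KE]
    calc ENNReal.ofReal (1 / L) * (∫⁻ ω, (∫⁻ s in Ioi (0 : ℝ), G s ω) ∂ℙ)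
        ≤ ENNReal.ofReal (1 / L) * (ENNReal.ofReal L * ∑' n, ℙ (B n)) :=
          mul_le_mul_right hupint _
      _ = ∑' n, ℙ (B n) := hcancel _
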